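/- Let f, g : [a,b] → ℝ (with a < b) be integrable, suppose g is non-increasing on [a,b], and suppose f belongs to the class M⁻ on [a,b]. Then (1/(b-a)) ∫ₐᵇ f(x)g(x) dx ≥ ((1/(b-a)) ∫ₐᵇ f(x) dx) · ((1/(b-a)) ∫ₐᵇ g(x) dx). -/

import Mathlib

open MeasureTheory Set

/-- An integrable function `f : [a,b] → ℝ` belongs to the class `M⁻` if there is
`c ∈ [a,b]` such that `f x < avg f → x > c` and `f x > avg f → x < c`
(for `x ∈ [a,b]`), where `avg f = (1/(b-a)) ∫ₐᵇ f`. -/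
def MemMMinus (f : ℝ → ℝ) (a b : ℝ) : Prop :=
  ∃ c ∈ Icc a b, ∀ x ∈ Icc a b,
    (f x < (1 / (b - a)) * ∫ t in a..b, f t → c < x) ∧
    ((1 / (b - a)) * ∫ t in a..b, f t < f x → x < c)

/-- **Strengthened Chebyshev inequality.** If `f, g` are integrable on `[a,b]` (`a < b`),
`g` is non-increasing on `[a,b]`, `f ∈ M⁻` and `f·g` is integrable, then
`(1/(b-a)) ∫ₐᵇ f g ≥ ((1/(b-a)) ∫ₐᵇ f) ((1/(b-a)) ∫ₐᵇ g)`. -/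
theorem chebyshev_MMinus_anti (a b : ℝ) (hab : a < b) (f g : ℝ → ℝ)
    (hf_int : IntegrableOn f (Icc a b))
    (hg_int : IntegrableOn g (Icc a b))
    (hfg_int : IntegrableOn (fun x => f x * g x) (Icc a b))
    (hg_anti : AntitoneOn g (Icc a b))
    (hf : MemMMinus f a b) :
    (1 / (b - a)) * ∫ x in a..b, f x * g x ≥
      ((1 / (b - a)) * ∫ x in a..b, f x) * ((1 / (b - a)) * ∫ x in a..b, g x) := by
  obtain ⟨c, hc, hcf⟩ := hf
  set A : ℝ := (1 / (b - a)) * ∫ t in a..b, f t with hA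
  have hsub : uIoc a b ⊆ Icc a b := by
    rw [uIoc_of_le hab.le]; exact Ioc_subset_Icc_self
  have hfI : IntervalIntegrable f volume a b :=
    (intervalIntegrable_iff).2 (hf_int.mono_set hsub)
  have hgI : IntervalIntegrable g volume a b :=
    (intervalIntegrable_iff).2 (hg_int.mono_set hsub)
  have hfgI : IntervalIntegrable (fun x => f x * g x) volume a b :=
    (intervalIntegrable_iff).2 (hfg_int.mono_set hsub)
  have key : 0 ≤ ∫ x in a..b, (f x - A) * (g x - g c) := by
    apply intervalIntegral.integral_nonneg hab.le
    intro u hu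
    rcases lt_trichotomy (f u) A with h | h | h
    · have hcu : c < u := (hcf u hu).1 h
      have : g u ≤ g c := hg_anti hc hu hcu.le
      nlinarith [mul_nonneg (show (0:ℝ) ≤ A - f u by linarith) (show (0:ℝ) ≤ g c - g u by linarith)]
    · simp [h]
    · have huc : u < c := (hcf u hu).2 h
      have : g c ≤ g u := hg_anti hu hc huc.le
      exact mul_nonneg (by linarith) (by linarith)
  have hexp : ∫ x in a..b, (f x - A) * (g x - g c)
      = (∫ x in a..b, f x * g x) - g c * (∫ x in a..b, f x)
        - A * (∫ x in a..b, g x) + A * g c * (b - a) := by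
    have h1 : IntervalIntegrable (fun x => g c * f x) volume a b := hfI.const_mul _
    have h2 : IntervalIntegrable (fun x => A * g x) volume a b := hgI.const_mul _
    have h3 : IntervalIntegrable (fun x => f x * g x - g c * f x) volume a b := hfgI.sub h1
    have h4 : IntervalIntegrable (fun x => f x * g x - g c * f x - A * g x) volume a b :=
      h3.sub h2
    have heq : (fun x => (f x - A) * (g x - g c))
        = fun x => f x * g x - g c * f x - A * g x + A * g c := by
      funext x; ring
    rw [heq, intervalIntegral.integral_add h4 intervalIntegrable_const,
      intervalIntegral.integral_sub h3 h2, intervalIntegral.integral_sub hfgI h1,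
      intervalIntegral.integral_const_mul, intervalIntegral.integral_const_mul,
      intervalIntegral.integral_const, smul_eq_mul]
    ring
  have hfA : ∫ x in a..b, f x = A * (b - a) := by
    rw [hA, one_div, mul_comm, ← mul_assoc, mul_inv_cancel₀ (show b - a ≠ 0 by linarith), one_mul]
  rw [hexp, hfA] at key
  have hpos : 0 < 1 / (b - a) := div_pos one_pos (by linarith)
  rw [ge_iff_le]
  have hle : A * (∫ x in a..b, g x) ≤ ∫ x in a..b, f x * g x := by nlinarith
  calc A * ((1 / (b - a)) * ∫ x in a..b, g x)
      = (1 / (b - a)) * (A * (∫ x in a..b, g x)) := by ring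
    _ ≤ (1 / (b - a)) * ∫ x in a..b, f x * g x :=
        mul_le_mul_of_nonneg_left hle hpos.le
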